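/- The function φ(H) = ln(1 + H) − H/(1 + H) is strictly increasing on [0, ∞), with φ(0) = 0 and φ(H) → ∞ as H → ∞; hence for every p > 0 there is a unique H(p) > 0 with φ(H(p)) = p. Moreover, for every g > 0 the function w ↦ w·ln(1 + g/w) − p·w on (0, ∞) has the unique maximizer w* = g/H(p), the resulting SNR is g/w* = H(p) (independent of g), and the maximum payoff equals (g/H(p))·(ln(1 + H(p)) − p), which is linear in g. -/

import Mathlib

open Real Filter

/-- `φ(H) = ln(1 + H) − H/(1 + H)`, whose value at `H` is the price at which a
user's optimal SNR equals `H` in the general-SNR model. -/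
noncomputable def phi (H : ℝ) : ℝ := Real.log (1 + H) - H / (1 + H)

lemma key_log (a b : ℝ) (ha : 0 < 1 + a) (hb : 0 < 1 + b) (hne : a ≠ b) :
    Real.log (1 + b) - Real.log (1 + a) < (b - a) / (1 + a) := by
  have h1 : (0:ℝ) < (1 + b) / (1 + a) := div_pos hb ha
  have h2 : (1 + b) / (1 + a) ≠ 1 := by
    intro h
    apply hne
    field_simp at h
    linarith
  have h3 := Real.log_lt_sub_one_of_pos h1 h2
  rw [Real.log_div (by linarith) (by linarith)] at h3
  have h4 : (1 + b) / (1 + a) - 1 = (b - a) / (1 + a) := by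
    field_simp
    ring
  linarith

lemma phi_mono : StrictMonoOn phi (Set.Ici 0) := by
  intro a ha b hb hab
  simp only [Set.mem_Ici] at ha hb
  have ha1 : (0:ℝ) < 1 + a := by linarith
  have hb1 : (0:ℝ) < 1 + b := by linarith
  have h := key_log b a hb1 ha1 (ne_of_gt hab)
  have hd : b / (1 + b) - a / (1 + a) = (b - a) / ((1 + a) * (1 + b)) := by
    field_simp; ring
  have h5 : (b - a) / (1 + b) - (b - a) / ((1 + a) * (1 + b))
      = (b - a) * a / ((1 + a) * (1 + b)) := by
    field_simp; ring
  have h6 : 0 ≤ (b - a) * a / ((1 + a) * (1 + b)) := by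
    apply div_nonneg
    · nlinarith
    · positivity
  have h7 : (a - b) / (1 + b) = -((b - a) / (1 + b)) := by ring
  unfold phi
  linarith

lemma phi_zero : phi 0 = 0 := by simp [phi]

lemma phi_top : Tendsto phi atTop atTop := by
  have hlog : Tendsto (fun H : ℝ => Real.log (1 + H)) atTop atTop :=
    Real.tendsto_log_atTop.comp (tendsto_atTop_add_const_left _ 1 tendsto_id)
  have h1 : Tendsto (fun H : ℝ => Real.log (1 + H) + (-1)) atTop atTop :=
    tendsto_atTop_add_const_right _ (-1) hlog
  apply tendsto_atTop_mono' atTop _ h1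
  filter_upwards [eventually_ge_atTop (0:ℝ)] with H hH
  have hb1 : (0:ℝ) < 1 + H := by linarith
  have : H / (1 + H) ≤ 1 := by
    rw [div_le_one hb1]; linarith
  simp only [phi]
  linarith

lemma phi_cont : ContinuousOn phi (Set.Ici 0) := by
  have hne : ∀ x ∈ Set.Ici (0:ℝ), (1:ℝ) + x ≠ 0 := by
    intro x hx
    simp only [Set.mem_Ici] at hx
    positivity
  exact ContinuousOn.sub
    ((continuous_const.add continuous_id).continuousOn.log hne)
    (continuousOn_id.div (continuous_const.add continuous_id).continuousOn hne)

/-- `φ` is strictly increasing on `[0,∞)` with `φ(0) = 0` and `φ(H) → ∞`; hence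
for every `p > 0` there is a unique `H(p) > 0` with `φ(H(p)) = p`.  Moreover, for
every `g > 0` the payoff `w ↦ w·ln(1 + g/w) − p·w` on `(0,∞)` has the unique
maximizer `w* = g/H(p)`, the resulting SNR `g/w*` equals `H(p)` (independent of
`g`), and the maximum payoff is `(g/H(p))·(ln(1 + H(p)) − p)`, linear in `g`. -/
theorem stmt_11 :
    StrictMonoOn phi (Set.Ici 0) ∧ phi 0 = 0 ∧ Tendsto phi atTop atTop ∧
    ∀ p : ℝ, 0 < p →
      (∃! H : ℝ, 0 < H ∧ phi H = p) ∧
      ∀ H : ℝ, 0 < H → phi H = p → ∀ g : ℝ, 0 < g →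
        (∀ w ∈ Set.Ioi (0 : ℝ), w ≠ g / H →
          w * Real.log (1 + g / w) - p * w <
            (g / H) * Real.log (1 + g / (g / H)) - p * (g / H)) ∧
        g / (g / H) = H ∧
        (g / H) * Real.log (1 + g / (g / H)) - p * (g / H)
          = (g / H) * (Real.log (1 + H) - p) := by
  refine ⟨phi_mono, phi_zero, phi_top, ?_⟩
  intro p hp
  constructor
  · -- existence and uniqueness
    obtain ⟨b, hbp, hb0⟩ :=
      ((phi_top.eventually_ge_atTop p).and (eventually_ge_atTop (0:ℝ))).exists
    have hsub : Set.Icc (phi 0) (phi b) ⊆ phi '' Set.Icc 0 b :=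
      intermediate_value_Icc hb0 (phi_cont.mono (Set.Icc_subset_Ici_self))
    have hpmem : p ∈ Set.Icc (phi 0) (phi b) := by
      rw [phi_zero]; exact ⟨le_of_lt hp, hbp⟩
    obtain ⟨H, hHmem, hHp⟩ := hsub hpmem
    have hH0 : 0 < H := by
      rcases lt_or_eq_of_le hHmem.1 with h | h
      · exact h
      · exfalso; rw [← h] at hHp; rw [phi_zero] at hHp; linarith
    refine ⟨H, ⟨hH0, hHp⟩, ?_⟩
    intro y ⟨hy0, hyp⟩
    exact phi_mono.injOn (le_of_lt hy0) (le_of_lt hH0) (by rw [hyp, hHp])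
  · intro H hH hphi g hg
    have hHne : H ≠ 0 := ne_of_gt hH
    have hgne : g ≠ 0 := ne_of_gt hg
    have hsnr : g / (g / H) = H := by
      field_simp
    have hH1 : (0:ℝ) < 1 + H := by linarith
    have hpeq : p = Real.log (1 + H) - H / (1 + H) := by
      rw [← hphi]; rfl
    refine ⟨?_, hsnr, by rw [hsnr]; ring⟩
    intro w hw hwne
    simp only [Set.mem_Ioi] at hw
    set h := g / w with hh
    have hhpos : 0 < h := div_pos hg hw
    have hh1 : (0:ℝ) < 1 + h := by linarith
    have hhne : h ≠ H := by
      intro heq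
      apply hwne
      rw [hh] at heq
      field_simp at heq ⊢
      linarith [heq]
    have hk := key_log H h hH1 hh1 (Ne.symm hhne)
    -- log(1+h) - log(1+H) < (h - H)/(1+H)
    have hlt : Real.log (1 + h) - p < h / (1 + H) := by
      rw [hpeq]
      have : (h - H) / (1 + H) + H / (1 + H) = h / (1 + H) := by ring
      linarith
    have hwh : w * h = g := by
      rw [hh]; field_simp
    have hmul : w * (Real.log (1 + h) - p) < w * (h / (1 + H)) :=
      mul_lt_mul_of_pos_left hlt hw
    have hwhd : w * (h / (1 + H)) = g / (1 + H) := by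
      rw [← hwh]; ring
    have hrhs : (g / H) * Real.log (1 + H) - p * (g / H) = g / (1 + H) := by
      rw [hpeq]
      field_simp
      ring
    rw [hsnr, hrhs]
    calc w * Real.log (1 + g / w) - p * w = w * (Real.log (1 + h) - p) := by
          rw [hh]; ring
      _ < w * (h / (1 + H)) := hmul
      _ = g / (1 + H) := hwhd
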